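/- For any functions f, g : K → ℝ and any n ∈ ℕ, one has φ_n(1, f·g) = φ_n(f, g) + φ_n(g, f). Consequently, if two of the three pairs (1, f·g), (f, g), (g, f) are integrable on K, then so is the third, and φ(1, f·g) = φ(f, g) + φ(g, f). -/
import Mathlib


open Filter Topology

/-- For a word `s = (s_1, …, s_n)` over the alphabet `Fin (N+1)`,
`wmap F s = F s_1 ∘ ⋯ ∘ F s_n`. -/
noncomputable def wmap {N n : ℕ} (F : Fin (N + 1) → ℝ → ℝ) (s : Fin n → Fin (N + 1)) :
    ℝ → ℝ :=
  (List.ofFn s).foldr (fun i h => F i ∘ h) id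

/-- `φ_n(f,g) = ∑_{s ∈ S^n} (f(a_s)+f(b_s))·(g(b_s)−g(a_s))`. -/
noncomputable def phiSeq {N : ℕ} (F : Fin (N + 1) → ℝ → ℝ) (a b : ℝ) (f g : ℝ → ℝ)
    (n : ℕ) : ℝ :=
  ∑ s : Fin n → Fin (N + 1),
    (f (wmap F s a) + f (wmap F s b)) * (g (wmap F s b) - g (wmap F s a))

/-- Integration by parts: `φ_n(1, f·g) = φ_n(f,g) + φ_n(g,f)` for all `n`; hence if
two of the three pairs `(1, f·g)`, `(f,g)`, `(g,f)` are integrable then so is the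
third, and `φ(1, f·g) = φ(f,g) + φ(g,f)`. -/
theorem integration_by_parts
    {N : ℕ} (r c : Fin (N + 1) → ℝ)
    (hr0 : ∀ s, 0 < r s) (hr1 : ∀ s, r s < 1)
    (a b : ℝ) (hab : a < b)
    (F : Fin (N + 1) → ℝ → ℝ) (hF : ∀ s x, F s x = r s * x + c s)
    (ha : F 0 a = a) (hb : F (Fin.last N) b = b)
    (hord : ∀ l : Fin N, F l.castSucc b ≤ F l.succ a)
    (f g : ℝ → ℝ) :
    (∀ n : ℕ, phiSeq F a b (fun _ => 1) (fun x => f x * g x) n =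
      phiSeq F a b f g n + phiSeq F a b g f n) ∧
    (∀ L₁ L₂ : ℝ, Tendsto (phiSeq F a b f g) atTop (nhds L₁) →
      Tendsto (phiSeq F a b g f) atTop (nhds L₂) →
      Tendsto (phiSeq F a b (fun _ => 1) (fun x => f x * g x)) atTop (nhds (L₁ + L₂))) ∧
    (∀ L₁ L₃ : ℝ, Tendsto (phiSeq F a b f g) atTop (nhds L₁) →
      Tendsto (phiSeq F a b (fun _ => 1) (fun x => f x * g x)) atTop (nhds L₃) →
      Tendsto (phiSeq F a b g f) atTop (nhds (L₃ - L₁))) ∧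
    (∀ L₂ L₃ : ℝ, Tendsto (phiSeq F a b g f) atTop (nhds L₂) →
      Tendsto (phiSeq F a b (fun _ => 1) (fun x => f x * g x)) atTop (nhds L₃) →
      Tendsto (phiSeq F a b f g) atTop (nhds (L₃ - L₂))) := by
  have key : ∀ n : ℕ, phiSeq F a b (fun _ => 1) (fun x => f x * g x) n =
      phiSeq F a b f g n + phiSeq F a b g f n := by
    intro n
    unfold phiSeq
    rw [← Finset.sum_add_distrib]
    apply Finset.sum_congr rfl
    intro s _
    ring
  refine ⟨key, ?_, ?_, ?_⟩
  · intro L₁ L₂ h1 h2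
    have := h1.add h2
    exact this.congr (fun n => (key n).symm)
  · intro L₁ L₃ h1 h3
    have := h3.sub h1
    exact this.congr (fun n => by rw [key n]; ring)
  · intro L₂ L₃ h2 h3
    have := h3.sub h2
    exact this.congr (fun n => by rw [key n]; ring)
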